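/- arXiv:1412.1366 — 2 statements merged into one kernel-verified Lean document; each statement's English description precedes it below -/
import Mathlib

section
/- Let L ∈ M_0 and define ρ_L := sup{t > 0 : L_{t-} = L*_{t-}}. Then ρ_L < ∞ a.s., L_{ρ_L -} = L*_{ρ_L -} = L*_{ρ_L} = L*_∞ a.s., i.e., the left limit of L at ρ_L equals the overall supremum of L. -/
open MeasureTheory Filter Set
open scoped NNReal ENNReal

noncomputable section

variable {Ω : Type*}

/-- Running supremum `L*_t = sup_{0 ≤ s ≤ t} L_s`. -/
def runSup (L : ℝ≥0 → Ω → ℝ) (t : ℝ≥0) (ω : Ω) : ℝ :=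
  ⨆ s : Set.Iic t, L s.1 ω

/-- Overall supremum of a nonnegative process, valued in `ℝ≥0∞`. -/
def supAll (L : ℝ≥0 → Ω → ℝ) (ω : Ω) : ℝ≥0∞ :=
  ⨆ t, ENNReal.ofReal (L t ω)

/-- Overall supremum as a real number. -/
def supAllR (L : ℝ≥0 → Ω → ℝ) (ω : Ω) : ℝ :=
  ⨆ t, L t ω

/-- Left limit of the path at a (possibly infinite) time; at `∞` we take the liminf at
infinity (which is the limit `L_∞` when it exists). -/
def leftLimE (L : ℝ≥0 → Ω → ℝ) (ω : Ω) (r : ℝ≥0∞) : ℝ :=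
  if r ≠ ∞ then Function.leftLim (fun s => L s ω) r.toNNReal
  else Filter.liminf (fun t => L t ω) Filter.atTop

/-- Càdlàg (right-continuous with left limits) real functions on `ℝ≥0`. -/
def Cadlag (f : ℝ≥0 → ℝ) : Prop :=
  (∀ t, ContinuousWithinAt f (Set.Ici t) t) ∧
  ∀ t : ℝ≥0, 0 < t → ∃ l, Tendsto f (nhdsWithin t (Set.Iio t)) (nhds l)

/-- `ℝ≥0∞`-valued stopping time with respect to a filtration indexed by `ℝ≥0`. -/
def IsStoppingTimeE {m : MeasurableSpace Ω} (ℱ : Filtration ℝ≥0 m) (τ : Ω → ℝ≥0∞) : Prop :=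
  ∀ t : ℝ≥0, MeasurableSet[ℱ t] {ω | τ ω ≤ (t : ℝ≥0∞)}

/-- The σ-algebra `F_τ` of events prior to a (possibly infinite) stopping time `τ`. -/
def stoppedSigma {m : MeasurableSpace Ω} (ℱ : Filtration ℝ≥0 m) (τ : Ω → ℝ≥0∞) :
    MeasurableSpace Ω :=
  MeasurableSpace.generateFrom
    {s | ∀ t : ℝ≥0, MeasurableSet[ℱ t] (s ∩ {ω | τ ω ≤ (t : ℝ≥0∞)})}

/-- Predictable stopping time: a stopping time announced by an increasing sequence of
stopping times. -/
def IsPredictableST {m : MeasurableSpace Ω} (ℱ : Filtration ℝ≥0 m) (τ : Ω → ℝ≥0∞) : Prop :=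
  IsStoppingTimeE ℱ τ ∧
  ∃ σ : ℕ → Ω → ℝ≥0∞, (∀ n, IsStoppingTimeE ℱ (σ n)) ∧
    (∀ n ω, σ n ω ≤ σ (n + 1) ω) ∧ (∀ n ω, σ n ω ≤ τ ω) ∧
    (∀ n ω, 0 < τ ω → σ n ω < τ ω) ∧
    ∀ ω, Tendsto (fun n => σ n ω) atTop (nhds (τ ω))

/-- A random time avoids all predictable stopping times. -/
def AvoidsPredictableST {m : MeasurableSpace Ω} (ℱ : Filtration ℝ≥0 m) (μ : Measure Ω)
    (ρ : Ω → ℝ≥0∞) : Prop :=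
  ∀ σ : Ω → ℝ≥0∞, IsPredictableST ℱ σ → μ {ω | ρ ω = σ ω} = 0

/-- A random time avoids all stopping times. -/
def AvoidsAllST {m : MeasurableSpace Ω} (ℱ : Filtration ℝ≥0 m) (μ : Measure Ω)
    (ρ : Ω → ℝ≥0∞) : Prop :=
  ∀ σ : Ω → ℝ≥0∞, IsStoppingTimeE ℱ σ → μ {ω | ρ ω = σ ω} = 0

/-- Totally inaccessible stopping time. -/
def IsTotallyInaccessible {m : MeasurableSpace Ω} (ℱ : Filtration ℝ≥0 m) (μ : Measure Ω)
    (τ : Ω → ℝ≥0∞) : Prop :=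
  IsStoppingTimeE ℱ τ ∧
  ∀ σ : Ω → ℝ≥0∞, IsPredictableST ℱ σ → μ {ω | τ ω = σ ω ∧ τ ω ≠ ∞} = 0

/-- Local martingale, defined via a localizing sequence of finite stopping times. -/
def IsLocalMartingale {m : MeasurableSpace Ω} (ℱ : Filtration ℝ≥0 m) (μ : Measure Ω)
    (L : ℝ≥0 → Ω → ℝ) : Prop :=
  Adapted ℱ L ∧
  ∃ τ : ℕ → Ω → ℝ≥0, (∀ n, IsStoppingTime ℱ (fun ω => ((τ n ω : ℝ≥0) : WithTop ℝ≥0))) ∧ (∀ n ω, τ n ω ≤ τ (n + 1) ω) ∧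
    (∀ᵐ ω ∂μ, Tendsto (fun n => τ n ω) atTop atTop) ∧
    ∀ n, Martingale (fun t ω => L (min (τ n ω) t) ω) ℱ μ

/-- The class `M_0`: nonnegative càdlàg local martingales with `L_0 = 1`, `L_∞ = 0` a.s.,
and continuous running supremum. -/
def MemM0 {m : MeasurableSpace Ω} (ℱ : Filtration ℝ≥0 m) (μ : Measure Ω)
    (L : ℝ≥0 → Ω → ℝ) : Prop :=
  IsLocalMartingale ℱ μ L ∧ (∀ t ω, 0 ≤ L t ω) ∧ (∀ ω, L 0 ω = 1) ∧
  (∀ ω, Cadlag fun t => L t ω) ∧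
  (∀ᵐ ω ∂μ, Tendsto (fun t => L t ω) atTop (nhds 0)) ∧
  ∀ᵐ ω ∂μ, Continuous fun t => runSup L t ω

/-- The (last) time of maximum `ρ_L = sup {t > 0 : L_{t-} = L*_{t-}}`. -/
def rhoL (L : ℝ≥0 → Ω → ℝ) (ω : Ω) : ℝ≥0∞ :=
  ⨆ t ∈ {t : ℝ≥0 | 0 < t ∧
      Function.leftLim (fun s => L s ω) t = Function.leftLim (fun s => runSup L s ω) t},
    (t : ℝ≥0∞)

/-- The time `ρ'_L = sup {t > 0 : L_t = L*_t}`. -/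
def rhoL' (L : ℝ≥0 → Ω → ℝ) (ω : Ω) : ℝ≥0∞ :=
  ⨆ t ∈ {t : ℝ≥0 | 0 < t ∧ L t ω = runSup L t ω}, (t : ℝ≥0∞)

/-- `Z` is (a version of) the Azéma supermartingale of the random time `ρ`:
`Z_t = P(ρ > t | F_t)`. -/
def IsAzema {m : MeasurableSpace Ω} (ℱ : Filtration ℝ≥0 m) (μ : Measure Ω)
    (ρ : Ω → ℝ≥0∞) (Z : ℝ≥0 → Ω → ℝ) : Prop :=
  ∀ t : ℝ≥0, Z t =ᵐ[μ]
    μ[Set.indicator {ω | (t : ℝ≥0∞) < ρ ω} (fun _ => (1 : ℝ)) | ℱ t]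

/-- The predictable σ-algebra on `ℝ≥0 × Ω`, generated by the stochastic intervals
`{0} × A` (`A ∈ F_0`) and `(u, v] × A` (`A ∈ F_u`). -/
def predictableSigma {m : MeasurableSpace Ω} (ℱ : Filtration ℝ≥0 m) :
    MeasurableSpace (ℝ≥0 × Ω) :=
  MeasurableSpace.generateFrom
    ({s | ∃ A : Set Ω, MeasurableSet[ℱ 0] A ∧ s = ({0} : Set ℝ≥0) ×ˢ A} ∪
     {s | ∃ (u v : ℝ≥0) (A : Set Ω), u < v ∧ MeasurableSet[ℱ u] A ∧ s = Set.Ioc u v ×ˢ A})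

/-- The optional σ-algebra on `ℝ≥0 × Ω`, generated by the stochastic intervals
`[[τ, ∞[[` for stopping times `τ`. -/
def optionalSigma {m : MeasurableSpace Ω} (ℱ : Filtration ℝ≥0 m) :
    MeasurableSpace (ℝ≥0 × Ω) :=
  MeasurableSpace.generateFrom
    {s | ∃ τ : Ω → ℝ≥0∞, IsStoppingTimeE ℱ τ ∧
      s = {p : ℝ≥0 × Ω | τ p.2 ≤ (p.1 : ℝ≥0∞)}}

/-- The end of a (random) set `Γ ⊆ ℝ≥0 × Ω`. -/
def endTime (Γ : Set (ℝ≥0 × Ω)) (ω : Ω) : ℝ≥0∞ :=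
  ⨆ t ∈ {t : ℝ≥0 | (t, ω) ∈ Γ}, (t : ℝ≥0∞)

/-- Honest time: for every `t > 0`, `ρ` coincides on `{ρ < t}` with an
`F_t`-measurable random variable. -/
def IsHonest {m : MeasurableSpace Ω} (ℱ : Filtration ℝ≥0 m) (μ : Measure Ω)
    (ρ : Ω → ℝ≥0∞) : Prop :=
  ∀ t : ℝ≥0, 0 < t → ∃ ξ : Ω → ℝ≥0∞, Measurable[ℱ t] ξ ∧
    ∀ᵐ ω ∂μ, ρ ω < (t : ℝ≥0∞) → ρ ω = ξ ω

/-- `a` is the dual projection (w.r.t. the σ-algebra `P` on `ℝ≥0 × Ω`, predictable or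
optional) of the increasing process `1_{[ρ, ∞)}`: `a` is an increasing `P`-measurable
process, given by the distribution functions of a family of measures `κ ω`, such that
`E[∫ X dκ] = E[X_ρ 1_{ρ < ∞}]` for all bounded `P`-measurable `X`. -/
def IsDualProj {m : MeasurableSpace Ω} (ℱ : Filtration ℝ≥0 m) (μ : Measure Ω)
    (ρ : Ω → ℝ≥0∞) (P : MeasurableSpace (ℝ≥0 × Ω)) (a : ℝ≥0 → Ω → ℝ) : Prop :=
  Measurable[P] (Function.uncurry a) ∧
  ∃ κ : Ω → Measure ℝ≥0, (∀ ω, IsFiniteMeasure (κ ω)) ∧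
    (∀ ω t, a t ω = (κ ω (Set.Iic t)).toReal) ∧
    ∀ X : ℝ≥0 → Ω → ℝ, Measurable[P] (Function.uncurry X) →
      (∃ C : ℝ, ∀ t ω, |X t ω| ≤ C) →
      ∫ ω, ∫ t, X t ω ∂(κ ω) ∂μ =
        ∫ ω, (if ρ ω ≠ ∞ then X (ρ ω).toNNReal ω else 0) ∂μ

section AuxPathwise

open Topology

lemma nhds_Iio_zero : (𝓝[<] (0:ℝ≥0)) = ⊥ := by
  have : Set.Iio (0:ℝ≥0) = ∅ := by ext y; simp
  simp [nhdsWithin, this]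

lemma cadlag_loc_bdd {f : ℝ≥0 → ℝ} (hf : Cadlag f) (x : ℝ≥0) :
    ∃ C, ∀ᶠ y in 𝓝 x, f y ≤ C := by
  have hr : ∀ᶠ y in 𝓝[≥] x, f y ≤ f x + 1 := by
    have := (hf.1 x).eventually (eventually_le_nhds (lt_add_one (f x)))
    exact this
  rcases eq_or_lt_of_le (bot_le : (0:ℝ≥0) ≤ x) with h0 | hx
  · refine ⟨f x + 1, ?_⟩
    rw [← nhdsLT_sup_nhdsGE x, eventually_sup]
    refine ⟨?_, hr⟩
    rw [← h0]
    rw [show ((⊥:ℝ≥0)) = (0:ℝ≥0) from rfl, nhds_Iio_zero]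
    exact Filter.eventually_bot
  · obtain ⟨l, hl⟩ := hf.2 x hx
    refine ⟨max (f x + 1) (l + 1), ?_⟩
    rw [← nhdsLT_sup_nhdsGE x, eventually_sup]
    constructor
    · exact (hl.eventually (eventually_le_nhds (lt_add_one l))).mono
        fun y hy => le_max_of_le_right hy
    · exact hr.mono fun y hy => le_max_of_le_left hy

lemma cadlag_bddAbove {f : ℝ≥0 → ℝ} (hf : Cadlag f) (T : ℝ≥0) :
    BddAbove (f '' Set.Iic T) := by
  have hK : IsCompact (Set.Iic T) := by
    rw [← Set.Icc_bot]; exact isCompact_Icc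
  choose C hC using fun x => cadlag_loc_bdd hf x
  obtain ⟨t, ht⟩ := hK.elim_nhds_subcover' (fun x _ => {y | f y ≤ C x})
    (fun x _ => (hC x))
  have : f '' Set.Iic T ⊆ ⋃ x ∈ t, f '' {y | f y ≤ C x.1} := by
    rw [← Set.image_iUnion₂]; exact Set.image_mono  ht
  refine (BddAbove.mono this) ?_
  apply (Set.Finite.bddAbove_biUnion (t.finite_toSet)).2
  intro x _
  exact ⟨C x.1, fun v ⟨y, hy, hv⟩ => hv ▸ hy⟩

lemma pathwise {f F : ℝ≥0 → ℝ} {ρ : ℝ≥0∞} {M : ℝ} (hf : Cadlag f) (h1 : f 0 = 1)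
    (h0 : Tendsto f atTop (nhds 0))
    (hF : ∀ t, F t = sSup (f '' Set.Iic t))
    (hc : Continuous F)
    (hρ : ρ = ⨆ t ∈ {t : ℝ≥0 | 0 < t ∧
        Function.leftLim f t = Function.leftLim F t}, (t:ℝ≥0∞))
    (hM : M = ⨆ t, f t) :
    ρ < ∞ ∧ Function.leftLim f ρ.toNNReal = M ∧
      Function.leftLim F ρ.toNNReal = M ∧ F ρ.toNNReal = M := by
  have bdd : ∀ T, BddAbove (f '' Set.Iic T) := cadlag_bddAbove hf
  have hne : ∀ T : ℝ≥0, (f '' Set.Iic T).Nonempty :=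
    fun T => ⟨f 0, 0, Set.mem_Iic.2 zero_le, rfl⟩
  have hfle : ∀ s t : ℝ≥0, s ≤ t → f s ≤ F t :=
    fun s t h => (hF t) ▸ le_csSup (bdd t) ⟨s, h, rfl⟩
  have hFmono : Monotone F := fun s t h => by
    rw [hF s, hF t]
    exact csSup_le_csSup (bdd t) (hne s) (Set.image_mono  (Set.Iic_subset_Iic.2 h))
  have hF0 : F 0 = 1 := by
    rw [hF 0, show Set.Iic (0:ℝ≥0) = {0} from Set.Iic_bot, Set.image_singleton,
      csSup_singleton, h1]
  have hF1le : ∀ t, (1:ℝ) ≤ F t := fun t => hF0 ▸ hFmono bot_le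
  -- eventual smallness
  obtain ⟨T, hT⟩ : ∃ T : ℝ≥0, ∀ t ≥ T, f t < 1/2 := by
    have := h0.eventually (eventually_lt_nhds (by norm_num : (0:ℝ) < 1/2))
    exact eventually_atTop.1 this
  have hMub : ∀ t, f t ≤ F T := by
    intro t
    rcases le_or_gt t T with h | h
    · exact hfle t T h
    · exact le_trans (hT t h.le).le (le_trans (by norm_num) (hF1le T))
  have hFub : ∀ t, F t ≤ F T := by
    intro t; rw [hF t]
    exact csSup_le (hne t) fun v ⟨s, _, hv⟩ => hv ▸ hMub s
  have hbr : BddAbove (Set.range f) := ⟨F T, fun v ⟨s, hv⟩ => hv ▸ hMub s⟩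
  have hMFT : M = F T := by
    rw [hM]
    refine le_antisymm (ciSup_le hMub) ?_
    rw [hF T]
    exact csSup_le (hne T) fun v ⟨s, _, hv⟩ => hv ▸ le_ciSup hbr s
  have hFubM : ∀ t, F t ≤ M := fun t => hMFT ▸ hFub t
  have hfubM : ∀ t, f t ≤ M := fun t => hMFT ▸ hMub t
  -- τ
  set Sm := {t : ℝ≥0 | F t = M} with hSm
  have hSne : (Sm : Set ℝ≥0).Nonempty := ⟨T, hMFT.symm⟩
  have hclosed : IsClosed Sm := isClosed_eq hc continuous_const
  set τ := sInf Sm with hτdef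
  have hτmem : F τ = M := hclosed.csInf_mem hSne (OrderBot.bddBelow Sm)
  have hτlt : ∀ u, u < τ → F u < M := by
    intro u hu
    refine lt_of_le_of_ne (hFubM u) fun h => ?_
    exact absurd (csInf_le (OrderBot.bddBelow Sm) h) (not_le.2 hu)
  have neb : ∀ a : ℝ≥0, 0 < a → (𝓝[<] a).NeBot :=
    fun a ha => nhdsWithin_Iio_self_neBot' ⟨0, ha⟩
  have hFll : ∀ a : ℝ≥0, 0 < a → Function.leftLim F a = F a := by
    intro a ha
    exact leftLim_eq_of_tendsto (h := neb a ha)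
      ((hc.tendsto a).mono_left nhdsWithin_le_nhds)
  have hfll : ∀ a : ℝ≥0, 0 < a →
      Tendsto f (𝓝[<] a) (𝓝 (Function.leftLim f a)) := by
    intro a ha
    obtain ⟨l, hl⟩ := hf.2 a ha
    rwa [leftLim_eq_of_tendsto (h := neb a ha) hl]
  have key1 : ∀ a : ℝ≥0, 0 < a → Function.leftLim f a ≤ M := by
    intro a ha
    haveI := neb a ha
    exact le_of_tendsto (hfll a ha) (Eventually.of_forall fun s => hfubM s)
  -- key : left limit of f at τ-like points is M
  have key : ∀ a : ℝ≥0, 0 < a → F a = M → (∀ u, u < a → F u < M) →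
      Function.leftLim f a = M := by
    intro a ha hFa hprev
    haveI := neb a ha
    refine le_antisymm (key1 a ha) (not_lt.1 fun hlt => ?_)
    set l := Function.leftLim f a with hl
    set c := (l + M)/2 with hcdef
    have hcM : c < M := by rw [hcdef]; linarith
    have hlc : l < c := by rw [hcdef]; linarith
    have hev : ∀ᶠ s in 𝓝[<] a, f s < c := (hfll a ha).eventually (eventually_lt_nhds hlc)
    obtain ⟨u, hu, hsub⟩ := (mem_nhdsLT_iff_exists_Ioo_subset' ha).1 hev
    have hFa' : F a ≤ max (F u) c := by
      have hev2 : ∀ᶠ s in 𝓝[<] a, F s ≤ max (F u) c := by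
        filter_upwards [Ioo_mem_nhdsLT hu] with s hs
        rw [hF s]
        refine csSup_le (hne s) fun v ⟨w, hw, hv⟩ => hv ▸ ?_
        rcases le_or_gt w u with h | h
        · exact le_max_of_le_left (hfle w u h)
        · exact le_max_of_le_right (hsub ⟨h, lt_of_le_of_lt hw hs.2⟩).le
      have := le_of_tendsto ((hc.tendsto a).mono_left nhdsWithin_le_nhds) hev2
      exact this
    have : F a < M := lt_of_le_of_lt hFa' (max_lt (hprev u hu) hcM)
    exact absurd hFa this.ne
  -- the set A
  set A := {t : ℝ≥0 | 0 < t ∧ Function.leftLim f t = Function.leftLim F t} with hA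
  have hAsub : A ⊆ Set.Iic T := by
    rintro t ⟨ht0, hteq⟩
    by_contra h
    have hTt : T < t := not_le.1 h
    haveI := neb t ht0
    have h1' : Function.leftLim f t ≤ 1/2 := by
      refine le_of_tendsto (hfll t ht0) ?_
      filter_upwards [Ioo_mem_nhdsLT hTt] with s hs
      exact (hT s hs.1.le).le
    have h2 : (1:ℝ) ≤ Function.leftLim F t := by
      rw [hFll t ht0]; exact hF1le t
    rw [hteq] at h1'
    linarith
  have hρle : ρ ≤ (T : ℝ≥0∞) := by
    rw [hρ]
    exact iSup₂_le fun t ht => ENNReal.coe_le_coe.2 (hAsub ht)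
  have hρfin : ρ < ∞ := lt_of_le_of_lt hρle (ENNReal.coe_lt_top)
  set r := ρ.toNNReal with hrdef
  have hr : (r : ℝ≥0∞) = ρ := ENNReal.coe_toNNReal hρfin.ne
  have hρub : ∀ t ∈ A, t ≤ r := by
    intro t ht
    rw [← ENNReal.coe_le_coe, hr, hρ]
    exact le_iSup₂ (f := fun t (_ : t ∈ A) => (t:ℝ≥0∞)) t ht
  have hρlub : ∀ u : ℝ≥0, (∀ t ∈ A, t ≤ u) → r ≤ u := by
    intro u hu
    rw [← ENNReal.coe_le_coe, hr, hρ]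
    exact iSup₂_le fun t ht => ENNReal.coe_le_coe.2 (hu t ht)
  have hτA : 0 < τ → τ ∈ A := by
    intro hτ0
    refine ⟨hτ0, ?_⟩
    rw [key τ hτ0 hτmem hτlt, hFll τ hτ0, hτmem]
  have hτr : τ ≤ r := by
    rcases eq_or_lt_of_le (show (0:ℝ≥0) ≤ τ from bot_le) with h | h
    · exact h ▸ bot_le
    · exact hρub τ (hτA h)
  have hFr : F r = M := le_antisymm (hFubM r) (hτmem ▸ hFmono hτr)
  have hllFr : Function.leftLim F r = M := by
    rcases eq_or_lt_of_le (show (0:ℝ≥0) ≤ r from bot_le) with h | h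
    · rw [← h, leftLim_eq_of_eq_bot F nhds_Iio_zero, h, hFr]
    · rw [hFll r h, hFr]
  have hllfr : Function.leftLim f r = M := by
    rcases eq_or_lt_of_le (show (0:ℝ≥0) ≤ r from bot_le) with h | h
    · rw [← h, leftLim_eq_of_eq_bot f nhds_Iio_zero, h1, ← hF0, h, hFr]
    · -- r > 0
      by_cases hrA : r ∈ A
      · rw [hrA.2, hllFr]
      · have hτltr : τ < r := by
          rcases eq_or_lt_of_le hτr with h' | h'
          · exact absurd (h' ▸ hτA (h' ▸ h)) hrA
          · exact h'
        haveI := neb r h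
        refine le_antisymm (key1 r h) (not_lt.1 fun hlt => ?_)
        set l := Function.leftLim f r with hl
        set c := (l + M)/2 with hcdef
        have hcM : c < M := by rw [hcdef]; linarith
        have hlc : l < c := by rw [hcdef]; linarith
        have hev : ∀ᶠ s in 𝓝[<] r, f s < c := (hfll r h).eventually (eventually_lt_nhds hlc)
        obtain ⟨u₀, hu₀, hsub⟩ := (mem_nhdsLT_iff_exists_Ioo_subset' h).1 hev
        set u := max u₀ τ with hudef
        have hur : u < r := max_lt hu₀ hτltr
        -- find a ∈ A with u < a
        obtain ⟨a, haA, hua⟩ : ∃ a ∈ A, u < a := by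
          by_contra hcon
          push_neg at hcon
          exact absurd (hρlub u hcon) (not_le.2 hur)
        have har : a < r := lt_of_le_of_ne (hρub a haA) fun h' => hrA (h' ▸ haA)
        have ha0 : 0 < a := haA.1
        have hτa : τ ≤ a := le_of_lt (lt_of_le_of_lt (le_max_right u₀ τ) hua)
        have hFaM : F a = M := le_antisymm (hFubM a) (hτmem ▸ hFmono hτa)
        have hllfa : Function.leftLim f a = M := by
          rw [haA.2, hFll a ha0, hFaM]
        -- find s ∈ Ioo u a with f s > c
        haveI := neb a ha0
        have hev2 : ∀ᶠ s in 𝓝[<] a, c < f s := by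
          have : Tendsto f (𝓝[<] a) (𝓝 M) := hllfa ▸ hfll a ha0
          exact this.eventually (eventually_gt_nhds hcM)
        obtain ⟨s, hs1, hs2⟩ := (hev2.and (Ioo_mem_nhdsLT hua)).exists
        have hsIoo : s ∈ Set.Ioo u₀ r :=
          ⟨lt_of_le_of_lt (le_max_left u₀ τ) hs2.1, lt_trans hs2.2 har⟩
        exact absurd (hsub hsIoo) (not_lt.2 hs1.le)
  exact ⟨hρfin, hllfr, hllFr, hFr⟩

end AuxPathwise

/-- For `L ∈ M_0`, the time of maximum `ρ_L` is a.s. finite and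
`L_{ρ_L -} = L*_{ρ_L -} = L*_{ρ_L} = L*_∞` a.s. -/
theorem rhoL_finite_and_attains_max {m : MeasurableSpace Ω} (ℱ : Filtration ℝ≥0 m)
    (μ : Measure Ω) [IsProbabilityMeasure μ] (L : ℝ≥0 → Ω → ℝ) (hL : MemM0 ℱ μ L) :
    ∀ᵐ ω ∂μ, rhoL L ω < ∞ ∧
      Function.leftLim (fun s => L s ω) (rhoL L ω).toNNReal = supAllR L ω ∧
      Function.leftLim (fun s => runSup L s ω) (rhoL L ω).toNNReal = supAllR L ω ∧
      runSup L (rhoL L ω).toNNReal ω = supAllR L ω := by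
  filter_upwards [hL.2.2.2.2.1, hL.2.2.2.2.2] with ω h0 hc
  exact pathwise (f := fun t => L t ω) (F := fun t => runSup L t ω)
    (hL.2.2.2.1 ω) (hL.2.2.1 ω) h0
    (fun t => by rw [Set.image_eq_range]; rfl) hc rfl rfl

end
end

section
/- Let ρ be a random time that avoids all F-predictable stopping times. Then ρ is a totally inaccessible stopping time in the progressively enlarged filtration F^ρ, the smallest right-continuous filtration containing F and making ρ a stopping time. -/
open MeasureTheory Filter Set
open scoped NNReal ENNReal

noncomputable section

variable {Ω : Type*}

section AuxiliaryForTotallyInaccessible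

/-- Embedding of the rationals into `ℝ≥0` (negative rationals map to `0`). -/
private def eQ (q : ℚ) : ℝ≥0 := Real.toNNReal (q : ℝ)

/-- Embedding of the rationals into `ℝ≥0∞`. -/
private def eE (q : ℚ) : ℝ≥0∞ := (eQ q : ℝ≥0∞)

private lemma exists_rat_btwn_ennreal {x y : ℝ≥0∞} (h : x < y) :
    ∃ q : ℚ, x < eE q ∧ eE q < y := by
  obtain ⟨z, hz1, hz2⟩ := exists_between h
  have hx : x ≠ ∞ := ne_top_of_lt h
  have hzt : z ≠ ∞ := ne_top_of_lt hz2
  obtain ⟨q, hq1, hq2⟩ := exists_rat_btwn ((ENNReal.toReal_lt_toReal hx hzt).mpr hz1)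
  have he : eE q = ENNReal.ofReal (q : ℝ) := rfl
  refine ⟨q, ?_, ?_⟩
  · rw [he]
    exact (ENNReal.lt_ofReal_iff_toReal_lt hx).mpr hq1
  · rw [he]
    have hq0 : (0 : ℝ) ≤ (q : ℝ) := le_of_lt (lt_of_le_of_lt ENNReal.toReal_nonneg hq1)
    exact lt_of_lt_of_le ((ENNReal.ofReal_lt_iff_lt_toReal hq0 hzt).mpr hq2) hz2.le

private lemma exists_reduction {Ω : Type*} {m : MeasurableSpace Ω}
    (ℱ : Filtration ℝ≥0 m) (𝒢 : Filtration ℝ≥0 m) (ρ : Ω → ℝ≥0∞)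
    (h𝒢 : ∀ t : ℝ≥0, (𝒢 t : MeasurableSpace Ω) =
      ⨅ s ∈ Set.Ioi t, ((ℱ s : MeasurableSpace Ω) ⊔
        MeasurableSpace.comap (fun ω => min (ρ ω) (s : ℝ≥0∞)) inferInstance))
    {u v : ℝ≥0} (huv : u < v) {A : Set Ω} (hA : MeasurableSet[𝒢 u] A) :
    ∃ B : Set Ω, MeasurableSet[ℱ v] B ∧
      A ∩ {ω | (v : ℝ≥0∞) < ρ ω} = B ∩ {ω | (v : ℝ≥0∞) < ρ ω} := by
  set T : Set Ω := {ω | (v : ℝ≥0∞) < ρ ω} with hT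
  let M : MeasurableSpace Ω :=
    { MeasurableSet' := fun A => ∃ B : Set Ω, (ℱ v).MeasurableSet' B ∧ A ∩ T = B ∩ T
      measurableSet_empty := ⟨∅, (ℱ v).measurableSet_empty, by simp⟩
      measurableSet_compl := by
        rintro A ⟨B, hB, hAB⟩
        have hiff : ∀ ω, ω ∈ T → (ω ∈ A ↔ ω ∈ B) := by
          intro ω hω
          constructor
          · intro h; exact ((Set.ext_iff.mp hAB ω).mp ⟨h, hω⟩).1
          · intro h; exact ((Set.ext_iff.mp hAB ω).mpr ⟨h, hω⟩).1
        refine ⟨Bᶜ, (ℱ v).measurableSet_compl B hB, ?_⟩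
        ext ω
        simp only [Set.mem_inter_iff, Set.mem_compl_iff]
        constructor
        · rintro ⟨h1, h2⟩; exact ⟨fun hb => h1 ((hiff ω h2).mpr hb), h2⟩
        · rintro ⟨h1, h2⟩; exact ⟨fun ha => h1 ((hiff ω h2).mp ha), h2⟩
      measurableSet_iUnion := by
        intro f hf
        choose B hB hBf using hf
        refine ⟨⋃ i, B i, (ℱ v).measurableSet_iUnion B hB, ?_⟩
        rw [Set.iUnion_inter, Set.iUnion_inter]
        exact Set.iUnion_congr hBf }
  have h1 : (ℱ v : MeasurableSpace Ω) ≤ M := by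
    intro s hs
    exact ⟨s, hs, rfl⟩
  have h2 : MeasurableSpace.comap (fun ω => min (ρ ω) ((v : ℝ≥0) : ℝ≥0∞)) inferInstance ≤ M := by
    intro s hs
    obtain ⟨S, hS, rfl⟩ := hs
    by_cases hv : ((v : ℝ≥0) : ℝ≥0∞) ∈ S
    · refine ⟨Set.univ, ?_, ?_⟩
      · simpa using (ℱ v).measurableSet_compl ∅ (ℱ v).measurableSet_empty
      · ext ω
        constructor
        · rintro ⟨_, h⟩; exact ⟨Set.mem_univ ω, h⟩
        · rintro ⟨_, hω⟩
          refine ⟨?_, hω⟩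
          have hlt : ((v : ℝ≥0) : ℝ≥0∞) < ρ ω := hω
          have hmin : min (ρ ω) ((v : ℝ≥0) : ℝ≥0∞) = ((v : ℝ≥0) : ℝ≥0∞) :=
            min_eq_right (le_of_lt hlt)
          show min (ρ ω) ((v : ℝ≥0) : ℝ≥0∞) ∈ S
          rw [hmin]; exact hv
    · refine ⟨∅, (ℱ v).measurableSet_empty, ?_⟩
      ext ω
      constructor
      · rintro ⟨hmem, hω⟩
        exfalso
        have hlt : ((v : ℝ≥0) : ℝ≥0∞) < ρ ω := hω
        have hmin : min (ρ ω) ((v : ℝ≥0) : ℝ≥0∞) = ((v : ℝ≥0) : ℝ≥0∞) :=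
          min_eq_right (le_of_lt hlt)
        have hmem2 : min (ρ ω) ((v : ℝ≥0) : ℝ≥0∞) ∈ S := hmem
        rw [hmin] at hmem2
        exact hv hmem2
      · rintro ⟨h, _⟩; exact absurd h (Set.notMem_empty ω)
  have hle : (𝒢 u : MeasurableSpace Ω) ≤ M := by
    rw [h𝒢 u]
    exact le_trans (iInf_le_of_le v (iInf_le _ (Set.mem_Ioi.mpr huv))) (sup_le h1 h2)
  obtain ⟨B, hB, hAB⟩ := hle A hA
  exact ⟨B, hB, hAB⟩


private lemma key_avoid {Ω : Type*} {m : MeasurableSpace Ω}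
    (ℱ : Filtration ℝ≥0 m) (μ : Measure Ω) [IsProbabilityMeasure μ]
    (ρ : Ω → ℝ≥0∞) (hρmeas : Measurable ρ)
    (havoid : AvoidsPredictableST ℱ μ ρ)
    (𝒢 : Filtration ℝ≥0 m)
    (h𝒢 : ∀ t : ℝ≥0, (𝒢 t : MeasurableSpace Ω) =
      ⨅ s ∈ Set.Ioi t, ((ℱ s : MeasurableSpace Ω) ⊔
        MeasurableSpace.comap (fun ω => min (ρ ω) (s : ℝ≥0∞)) inferInstance))
    (σ : Ω → ℝ≥0∞) (hσ : IsPredictableST 𝒢 σ) {ε : ℝ≥0∞} (hε : ε ≠ 0) :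
    μ {ω | 0 < ρ ω ∧ ρ ω < ∞ ∧ ρ ω = σ ω} ≤ ε := by
  classical
  obtain ⟨hσstop, σs, hsstop, hsmono, hsle, hslt, hstend⟩ := hσ
  set G : Set Ω := {ω | 0 < ρ ω ∧ ρ ω < ∞ ∧ ρ ω = σ ω} with hG
  -- Step 1 : honest reductions of the announcing sequence before ρ
  have hBex : ∀ (k : ℕ) (p q : ℚ), ∃ B : Set Ω, MeasurableSet[ℱ (eQ q)] B ∧
      (eQ p < eQ q → {ω | σs k ω ≤ eE p} ∩ {ω | eE q < ρ ω} = B ∩ {ω | eE q < ρ ω}) := by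
    intro k p q
    by_cases h : eQ p < eQ q
    · obtain ⟨B, hB1, hB2⟩ := exists_reduction ℱ 𝒢 ρ h𝒢 h (hsstop k (eQ p))
      exact ⟨B, hB1, fun _ => hB2⟩
    · exact ⟨∅, (ℱ (eQ q)).measurableSet_empty, fun hc => absurd hc h⟩
  choose Bf hBf1 hBf2 using hBex
  set BB : ℕ → ℚ → Set Ω := fun k q => ⋃ p : ℚ, if eQ p < eQ q then Bf k p q else ∅ with hBB
  have hBBmeas : ∀ k q, MeasurableSet[ℱ (eQ q)] (BB k q) := by
    intro k q
    refine MeasurableSet.iUnion fun p => ?_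
    by_cases h : eQ p < eQ q
    · simpa [h] using hBf1 k p q
    · simp [h]
  have hBBiff : ∀ (k : ℕ) (q : ℚ) ω, eE q < ρ ω → (ω ∈ BB k q ↔ σs k ω < eE q) := by
    intro k q ω hω
    constructor
    · intro hmem
      obtain ⟨p, hp⟩ := Set.mem_iUnion.mp hmem
      by_cases h : eQ p < eQ q
      · rw [if_pos h] at hp
        have h2 : ω ∈ {ω | σs k ω ≤ eE p} ∩ {ω | eE q < ρ ω} := by
          rw [hBf2 k p q h]; exact ⟨hp, hω⟩
        exact lt_of_le_of_lt h2.1 (ENNReal.coe_lt_coe.mpr h)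
      · rw [if_neg h] at hp; exact absurd hp (Set.notMem_empty ω)
    · intro hlt
      obtain ⟨p, hp1, hp2⟩ := exists_rat_btwn_ennreal hlt
      have hpq : eQ p < eQ q := ENNReal.coe_lt_coe.mp hp2
      have hmem : ω ∈ Bf k p q ∩ {ω | eE q < ρ ω} := by
        rw [← hBf2 k p q hpq]; exact ⟨hp1.le, hω⟩
      exact Set.mem_iUnion.mpr ⟨p, by rw [if_pos hpq]; exact hmem.1⟩
  -- Step 2 : the début of the reduced events
  set gam : ℕ → Ω → ℝ≥0∞ := fun k ω => ⨅ p : ℚ, (if ω ∈ BB k p then eE p else ∞) with hgam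
  have hgam_meas : ∀ k, Measurable (gam k) := by
    intro k
    refine Measurable.iInf fun p => Measurable.ite ?_ measurable_const measurable_const
    exact (ℱ.le (eQ p)) _ (hBBmeas k p)
  have hgam_lt : ∀ (k : ℕ) ω (c : ℝ≥0∞), gam k ω < c ↔ ∃ p : ℚ, ω ∈ BB k p ∧ eE p < c := by
    intro k ω c
    rw [show gam k ω = ⨅ p : ℚ, (if ω ∈ BB k p then eE p else ∞) from rfl, iInf_lt_iff]
    constructor
    · rintro ⟨p, hp⟩
      by_cases h : ω ∈ BB k p
      · exact ⟨p, h, by rwa [if_pos h] at hp⟩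
      · rw [if_neg h] at hp; exact absurd hp (by simp)
    · rintro ⟨p, h1, h2⟩; exact ⟨p, by rwa [if_pos h1]⟩
  have hgam_G : ∀ ω, ω ∈ G → ∀ k, gam k ω = σs k ω := by
    intro ω hω k
    obtain ⟨hρ0, hρtop, hρσ⟩ := hω
    have hksl : σs k ω < ρ ω := by rw [hρσ]; exact hslt k ω (hρσ ▸ hρ0)
    refine le_antisymm ?_ ?_
    · by_contra hcon
      push_neg at hcon
      have h2 : σs k ω < min (gam k ω) (ρ ω) := lt_min hcon hksl
      obtain ⟨p, hp1, hp2⟩ := exists_rat_btwn_ennreal h2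
      have hpρ : eE p < ρ ω := lt_of_lt_of_le hp2 (min_le_right _ _)
      have hmem : ω ∈ BB k p := (hBBiff k p ω hpρ).mpr hp1
      have hle2 : gam k ω ≤ eE p := iInf_le_of_le p (by rw [if_pos hmem])
      exact absurd (lt_of_le_of_lt hle2 (lt_of_lt_of_le hp2 (min_le_left _ _)))
        (lt_irrefl _)
    · by_contra hcon
      push_neg at hcon
      obtain ⟨p, hmem, hplt⟩ := (hgam_lt k ω (σs k ω)).mp hcon
      have hpρ : eE p < ρ ω := lt_trans hplt hksl
      exact absurd ((hBBiff k p ω hpρ).mp hmem) (not_lt.mpr hplt.le)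
  -- Step 3 : capped running maximum
  set gh : ℕ → Ω → ℝ≥0∞ :=
    fun n ω => min ((Finset.range (n+1)).sup fun j => gam j ω) (n : ℝ≥0∞) with hgh
  have hgh_meas : ∀ n, Measurable (gh n) := by
    intro n
    have hsupm : ∀ s : Finset ℕ, Measurable fun ω => s.sup fun j => gam j ω := by
      intro s
      induction s using Finset.induction_on with
      | empty => simpa using measurable_const
      | @insert a s ha ih =>
        have heq : (fun ω => (insert a s).sup fun j => gam j ω)
            = fun ω => (gam a ω) ⊔ (s.sup fun j => gam j ω) := by
          funext ω; rw [Finset.sup_insert]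
        rw [heq]
        exact (hgam_meas a).max ih
    exact (hsupm _).min measurable_const
  have hmemG : ∀ ω, ω ∈ G → (0 < ρ ω ∧ ρ ω < ∞ ∧ ρ ω = σ ω) := fun ω hω => hω
  have hgh_lt_rho : ∀ ω, ω ∈ G → ∀ n, gh n ω < ρ ω := by
    intro ω hω n
    obtain ⟨hρ0, hρtop, hρσ⟩ := hmemG ω hω
    have hsup : ((Finset.range (n+1)).sup fun j => gam j ω) < ρ ω := by
      rw [Finset.sup_lt_iff (show ⊥ < ρ ω from hρ0)]
      intro j _
      rw [hgam_G ω hω j, hρσ]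
      exact hslt j ω (hρσ ▸ hρ0)
    exact lt_of_le_of_lt (min_le_left _ _) hsup
  have hgh_le_n : ∀ n ω, gh n ω ≤ (n : ℝ≥0∞) := fun n ω => min_le_right _ _
  have hgh_ne_top : ∀ n ω, gh n ω ≠ ∞ := fun n ω =>
    ne_top_of_le_ne_top (ENNReal.natCast_ne_top n) (hgh_le_n n ω)
  have hgh_sup : ∀ ω, ω ∈ G → (⨆ n, gh n ω) = ρ ω := by
    intro ω hω
    obtain ⟨hρ0, hρtop, hρσ⟩ := hmemG ω hω
    refine le_antisymm (iSup_le fun n => ?_) ?_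
    · refine le_trans (min_le_left _ _) (Finset.sup_le fun j _ => ?_)
      rw [hgam_G ω hω j, hρσ]
      exact hsle j ω
    · by_contra hcon
      push_neg at hcon
      have hmem2 : Set.Ioi (⨆ n, gh n ω) ∈ nhds (σ ω) := Ioi_mem_nhds (by rw [← hρσ]; exact hcon)
      obtain ⟨N, hN⟩ := Filter.eventually_atTop.mp ((hstend ω).eventually hmem2)
      have hsuptop : (⨆ n, gh n ω) ≠ ∞ := ne_top_of_lt hcon
      obtain ⟨M, hM⟩ := ENNReal.exists_nat_gt hsuptop
      set n := max N M with hn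
      have h1 : (⨆ k, gh k ω) < σs n ω := hN n (le_max_left _ _)
      have hg : (⨆ k, gh k ω) < gh n ω := by
        refine lt_min ?_ ?_
        · refine lt_of_lt_of_le h1 ?_
          rw [← hgam_G ω hω n]
          exact Finset.le_sup (f := fun j => gam j ω) (Finset.self_mem_range_succ n)
        · exact lt_of_lt_of_le hM (Nat.cast_le.mpr (le_max_right N M))
      exact absurd (le_iSup (fun k => gh k ω) n) (not_le.mpr hg)
  -- Step 4 : choice of the shifts δ
  set Bset : ℕ → ℝ≥0 → Set Ω := fun n δ =>
    {ω | 0 < ρ ω ∧ ρ ω < ∞ ∧ gh n ω < ρ ω ∧ ρ ω ≤ gh n ω + δ} with hBsetdef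
  have hBmeas : ∀ n δ, MeasurableSet (Bset n δ) := by
    intro n δ
    have : Bset n δ = {ω | 0 < ρ ω} ∩ ({ω | ρ ω < ∞} ∩ ({ω | gh n ω < ρ ω}
        ∩ {ω | ρ ω ≤ gh n ω + (δ : ℝ≥0∞)})) := rfl
    rw [this]
    exact (measurableSet_lt measurable_const hρmeas).inter
      ((measurableSet_lt hρmeas measurable_const).inter
        ((measurableSet_lt (hgh_meas n) hρmeas).inter
          (measurableSet_le hρmeas ((hgh_meas n).add measurable_const))))
  have hδex : ∀ n : ℕ, ∃ δ : ℝ≥0, 0 < δ ∧ μ (Bset n δ) ≤ ε * 2⁻¹ ^ (n+1) := by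
    intro n
    set S : ℕ → Set Ω := fun k => Bset n ((k : ℝ≥0) + 1)⁻¹ with hSdef
    have hanti : Antitone S := by
      intro a b hab ω hω
      refine ⟨hω.1, hω.2.1, hω.2.2.1, le_trans hω.2.2.2 ?_⟩
      refine add_le_add le_rfl (ENNReal.coe_le_coe.mpr ?_)
      have hba : (a : ℝ≥0) + 1 ≤ (b : ℝ≥0) + 1 := by
        exact add_le_add_left (Nat.cast_le.mpr hab) 1
      exact inv_anti₀ (by positivity) hba
    have hint : (⋂ k, S k) = ∅ := by
      ext ω
      simp only [Set.mem_iInter, Set.mem_empty_iff_false, iff_false]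
      intro hall
      have h3 : gh n ω < ρ ω := (hall 0).2.2.1
      have hle2 : ρ ω ≤ gh n ω := by
        refine ENNReal.le_of_forall_pos_le_add fun e he _ => ?_
        obtain ⟨k, hk⟩ := exists_nat_gt (e⁻¹ : ℝ≥0)
        have hk1 : (e : ℝ≥0)⁻¹ < (k : ℝ≥0) + 1 := hk.trans (lt_add_one _)
        have hc : ((k : ℝ≥0) + 1)⁻¹ ≤ e := by
          have he' : (0 : ℝ≥0) < ((k : ℝ≥0) + 1) := by positivity
          rw [inv_le_comm₀ he' he]
          exact hk1.le
        exact le_trans (hall k).2.2.2 (add_le_add le_rfl (ENNReal.coe_le_coe.mpr hc))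
      exact absurd h3 (not_lt.mpr hle2)
    have htend := tendsto_measure_iInter_atTop
      (fun k => (hBmeas n _).nullMeasurableSet) hanti ⟨0, measure_ne_top μ _⟩
    rw [hint] at htend
    simp only [measure_empty] at htend
    have hpos : 0 < ε * 2⁻¹ ^ (n+1) := by
      refine ENNReal.mul_pos hε ?_
      exact pow_ne_zero _ (by simp)
    obtain ⟨k, hk⟩ := (htend.eventually_lt_const hpos).exists
    exact ⟨((k : ℝ≥0) + 1)⁻¹, by positivity, hk.le⟩
  choose δf hδpos hδle using hδex
  -- Step 5 : the honest approximating sequence ξ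
  set eta : ℕ → Ω → ℝ≥0∞ := fun n ω => gh n ω + (δf n : ℝ≥0∞) with heta
  set xi : ℕ → Ω → ℝ≥0∞ := fun n ω => (Finset.range (n+1)).sup fun j => eta j ω with hxi
  have hxi_mono : ∀ ω, Monotone fun n => xi n ω := by
    intro ω
    refine monotone_nat_of_le_succ fun n => ?_
    exact Finset.sup_mono (Finset.range_subset_range.mpr (Nat.le_succ _))
  have heta_ne_top : ∀ n ω, eta n ω ≠ ∞ :=
    fun n ω => ENNReal.add_ne_top.mpr ⟨hgh_ne_top n ω, ENNReal.coe_ne_top⟩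
  have hxi_ne_top : ∀ n ω, xi n ω ≠ ∞ := by
    intro n ω
    rw [← lt_top_iff_ne_top]
    exact (Finset.sup_lt_iff (by simp)).mpr
      fun j _ => lt_top_iff_ne_top.mpr (heta_ne_top j ω)
  have hgam_lt_meas : ∀ (k : ℕ) (p : ℚ) (t : ℝ≥0), eQ p ≤ t →
      MeasurableSet[ℱ t] {ω | gam k ω < eE p} := by
    intro k p t hpt
    have hset : {ω | gam k ω < eE p} = ⋃ (r : ℚ), ⋃ (_ : eE r < eE p), BB k r := by
      ext ω
      simp only [Set.mem_setOf_eq, Set.mem_iUnion]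
      rw [hgam_lt]
      constructor
      · rintro ⟨r, h1, h2⟩; exact ⟨r, h2, h1⟩
      · rintro ⟨r, h2, h1⟩; exact ⟨r, h1, h2⟩
    rw [hset]
    refine MeasurableSet.iUnion fun r => MeasurableSet.iUnion fun hr => ?_
    exact (ℱ.mono (le_trans (le_of_lt (ENNReal.coe_lt_coe.mp hr)) hpt)) _ (hBBmeas k r)
  have hgh_lt_meas : ∀ (n : ℕ) (p : ℚ) (t : ℝ≥0), eQ p ≤ t → 0 < eE p →
      MeasurableSet[ℱ t] {ω | gh n ω < eE p} := by
    intro n p t hpt hp0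
    have hset : {ω | gh n ω < eE p} =
        (⋂ j, ⋂ (_ : j ∈ Finset.range (n+1)), {ω | gam j ω < eE p}) ∪
        (if (n : ℝ≥0∞) < eE p then Set.univ else (∅ : Set Ω)) := by
      ext ω
      simp only [Set.mem_union, Set.mem_iInter, Set.mem_setOf_eq]
      constructor
      · intro h
        rcases min_lt_iff.mp h with h | h
        · exact Or.inl fun j hj => (Finset.sup_lt_iff hp0).mp h j hj
        · right; rw [if_pos h]; trivial
      · intro h
        rcases h with h | h
        · exact min_lt_iff.mpr (Or.inl ((Finset.sup_lt_iff hp0).mpr h))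
        · by_cases hn : (n : ℝ≥0∞) < eE p
          · exact min_lt_iff.mpr (Or.inr hn)
          · rw [if_neg hn] at h; exact absurd h (Set.notMem_empty ω)
    rw [hset]
    refine MeasurableSet.union ?_ ?_
    · exact MeasurableSet.iInter fun j => MeasurableSet.iInter fun _ => hgam_lt_meas j p t hpt
    · by_cases hn : (n : ℝ≥0∞) < eE p
      · rw [if_pos hn]; exact @MeasurableSet.univ Ω (ℱ t)
      · rw [if_neg hn]; exact @MeasurableSet.empty Ω (ℱ t)
  have hxi_stop : ∀ n, IsStoppingTimeE ℱ (xi n) := by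
    intro n t
    have hxiset : {ω | xi n ω ≤ (t : ℝ≥0∞)} =
        ⋂ j, ⋂ (_ : j ∈ Finset.range (n+1)), {ω | eta j ω ≤ (t : ℝ≥0∞)} := by
      ext ω
      simp only [hxi, Set.mem_setOf_eq, Set.mem_iInter, Finset.sup_le_iff]
    rw [hxiset]
    refine MeasurableSet.iInter fun j => MeasurableSet.iInter fun _ => ?_
    by_cases hδt : δf j ≤ t
    · set s : ℝ≥0 := t - δf j with hsdef
      have hst : s + δf j = t := tsub_add_cancel_of_le hδt
      have hslt2 : s < t := tsub_lt_self (lt_of_lt_of_le (hδpos j) hδt) (hδpos j)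
      have hset : {ω | eta j ω ≤ (t : ℝ≥0∞)} = {ω | gh j ω ≤ (s : ℝ≥0∞)} := by
        ext ω
        simp only [heta, Set.mem_setOf_eq]
        rw [show ((t : ℝ≥0) : ℝ≥0∞) = (s : ℝ≥0∞) + (δf j : ℝ≥0∞) by
          rw [← ENNReal.coe_add, hst]]
        exact ENNReal.add_le_add_iff_right ENNReal.coe_ne_top
      rw [hset]
      have hset2 : {ω | gh j ω ≤ (s : ℝ≥0∞)} =
          ⋂ (p : ℚ), ⋂ (_ : (s : ℝ≥0∞) < eE p ∧ eE p ≤ (t : ℝ≥0∞)), {ω | gh j ω < eE p} := by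
        ext ω
        simp only [Set.mem_setOf_eq, Set.mem_iInter]
        constructor
        · intro h p hp; exact lt_of_le_of_lt h hp.1
        · intro h
          by_contra hcon
          push_neg at hcon
          have h2 : (s : ℝ≥0∞) < min (gh j ω) ((t : ℝ≥0) : ℝ≥0∞) :=
            lt_min hcon (ENNReal.coe_lt_coe.mpr hslt2)
          obtain ⟨p, hp1, hp2⟩ := exists_rat_btwn_ennreal h2
          exact lt_asymm (lt_of_lt_of_le hp2 (min_le_left _ _))
            (h p ⟨hp1, le_of_lt (lt_of_lt_of_le hp2 (min_le_right _ _))⟩)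
      rw [hset2]
      refine MeasurableSet.iInter fun p => MeasurableSet.iInter fun hp => ?_
      exact hgh_lt_meas j p t (ENNReal.coe_le_coe.mp hp.2) (lt_of_le_of_lt (zero_le) hp.1)
    · have hset : {ω | eta j ω ≤ (t : ℝ≥0∞)} = ∅ := by
        ext ω
        simp only [heta, Set.mem_setOf_eq, Set.mem_empty_iff_false, iff_false, not_le]
        calc ((t : ℝ≥0) : ℝ≥0∞) < ((δf j : ℝ≥0) : ℝ≥0∞) :=
              ENNReal.coe_lt_coe.mpr (not_le.mp hδt)
          _ ≤ gh j ω + (δf j : ℝ≥0∞) := le_add_self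
      rw [hset]
      exact @MeasurableSet.empty Ω (ℱ t)
  have hxi_le_rat : ∀ (n : ℕ) (p : ℚ) (t : ℝ≥0), eQ p ≤ t →
      MeasurableSet[ℱ t] {ω | xi n ω ≤ eE p} := by
    intro n p t hpt
    exact (ℱ.mono hpt) _ (hxi_stop n (eQ p))
  -- Step 6 : the predictable time σf and its announcing sequence
  set sigs : Ω → ℝ≥0∞ := fun ω => ⨆ n, xi n ω with hsigs
  set sigf : Ω → ℝ≥0∞ := fun ω => if ∀ n, xi n ω < sigs ω then sigs ω else ∞ with hsigf
  set zeta : ℕ → Ω → ℝ≥0∞ :=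
    fun n ω => if xi n ω < sigs ω then xi n ω else max (xi n ω) (n : ℝ≥0∞) with hzeta
  have hxile : ∀ n ω, xi n ω ≤ sigs ω := fun n ω => le_iSup (fun k => xi k ω) n
  have hpair_meas : ∀ (n k : ℕ) (t : ℝ≥0), MeasurableSet[ℱ t]
      {ω | xi n ω ≤ (t : ℝ≥0∞) ∧ xi n ω < xi k ω} := by
    intro n k t
    have hset : {ω | xi n ω ≤ (t : ℝ≥0∞) ∧ xi n ω < xi k ω} =
        ({ω | xi n ω ≤ (t : ℝ≥0∞)} ∩ {ω | xi k ω ≤ (t : ℝ≥0∞)}ᶜ) ∪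
        ⋃ (p : ℚ), ⋃ (_ : eE p ≤ (t : ℝ≥0∞)),
          ({ω | xi n ω ≤ eE p} ∩ {ω | xi k ω ≤ eE p}ᶜ) := by
      ext ω
      simp only [Set.mem_setOf_eq, Set.mem_union, Set.mem_inter_iff, Set.mem_compl_iff,
        Set.mem_iUnion]
      constructor
      · rintro ⟨h1, h2⟩
        by_cases h3 : xi k ω ≤ (t : ℝ≥0∞)
        · obtain ⟨p, hp1, hp2⟩ := exists_rat_btwn_ennreal h2
          exact Or.inr ⟨p, le_trans hp2.le h3, hp1.le, not_le.mpr hp2⟩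
        · exact Or.inl ⟨h1, h3⟩
      · rintro (⟨h1, h2⟩ | ⟨p, hp1, hp2, hp3⟩)
        · exact ⟨h1, lt_of_le_of_lt h1 (not_le.mp h2)⟩
        · exact ⟨le_trans hp2 hp1, lt_of_le_of_lt hp2 (not_le.mp hp3)⟩
    rw [hset]
    refine MeasurableSet.union ((hxi_stop n t).inter (hxi_stop k t).compl) ?_
    refine MeasurableSet.iUnion fun p => MeasurableSet.iUnion fun hp => ?_
    exact (hxi_le_rat n p t (ENNReal.coe_le_coe.mp hp)).inter
      (hxi_le_rat k p t (ENNReal.coe_le_coe.mp hp)).compl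
  have hzeta_stop : ∀ n, IsStoppingTimeE ℱ (zeta n) := by
    intro n t
    by_cases hn : (n : ℝ≥0∞) ≤ (t : ℝ≥0∞)
    · have hset : {ω | zeta n ω ≤ (t : ℝ≥0∞)} = {ω | xi n ω ≤ (t : ℝ≥0∞)} := by
        ext ω
        simp only [hzeta, Set.mem_setOf_eq]
        by_cases h : xi n ω < sigs ω
        · rw [if_pos h]
        · rw [if_neg h]
          constructor
          · intro hle; exact le_trans (le_max_left _ _) hle
          · intro hle; exact max_le hle hn
      rw [hset]; exact hxi_stop n t
    · have hset : {ω | zeta n ω ≤ (t : ℝ≥0∞)} =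
          ⋃ k, {ω | xi n ω ≤ (t : ℝ≥0∞) ∧ xi n ω < xi k ω} := by
        ext ω
        simp only [hzeta, Set.mem_setOf_eq, Set.mem_iUnion]
        by_cases h : xi n ω < sigs ω
        · rw [if_pos h]
          constructor
          · intro h1
            have h2 : xi n ω < ⨆ k, xi k ω := h
            obtain ⟨k, hk⟩ := lt_iSup_iff.mp h2
            exact ⟨k, h1, hk⟩
          · rintro ⟨k, h1, _⟩; exact h1
        · rw [if_neg h]
          constructor
          · intro h1
            exact absurd (le_trans (le_max_right _ _) h1) hn
          · rintro ⟨k, h1, h2⟩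
            exact absurd (lt_of_lt_of_le h2 (hxile k ω)) h
      rw [hset]
      exact MeasurableSet.iUnion fun k => hpair_meas n k t
  have hsigf_stop : IsStoppingTimeE ℱ sigf := by
    intro t
    have hset : {ω | sigf ω ≤ (t : ℝ≥0∞)} =
        (⋂ k, {ω | xi k ω ≤ (t : ℝ≥0∞)}) ∩
          ⋂ j, ⋃ k, {ω | xi j ω ≤ (t : ℝ≥0∞) ∧ xi j ω < xi k ω} := by
      ext ω
      simp only [hsigf, Set.mem_setOf_eq, Set.mem_inter_iff, Set.mem_iInter, Set.mem_iUnion]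
      by_cases h : ∀ k, xi k ω < sigs ω
      · rw [if_pos h]
        constructor
        · intro h1
          refine ⟨fun k => le_trans (hxile k ω) h1, fun j => ?_⟩
          have h2 : xi j ω < ⨆ k, xi k ω := h j
          obtain ⟨k, hk⟩ := lt_iSup_iff.mp h2
          exact ⟨k, le_trans (hxile j ω) h1, hk⟩
        · rintro ⟨h1, _⟩
          exact iSup_le h1
      · rw [if_neg h]
        constructor
        · intro h1
          exact absurd (top_le_iff.mp h1) ENNReal.coe_ne_top
        · rintro ⟨h1, h2⟩
          exfalso
          apply h
          intro j
          obtain ⟨k, _, hk2⟩ := h2 j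
          exact lt_of_lt_of_le hk2 (hxile k ω)
    rw [hset]
    exact (MeasurableSet.iInter fun k => hxi_stop k t).inter
      (MeasurableSet.iInter fun j => MeasurableSet.iUnion fun k => hpair_meas j k t)
  have hzeta_mono : ∀ (n : ℕ) ω, zeta n ω ≤ zeta (n+1) ω := by
    intro n ω
    by_cases h1 : xi n ω < sigs ω
    · by_cases h2 : xi (n+1) ω < sigs ω
      · simp only [hzeta, if_pos h1, if_pos h2]
        exact hxi_mono ω (Nat.le_succ n)
      · simp only [hzeta, if_pos h1, if_neg h2]
        exact le_trans (hxi_mono ω (Nat.le_succ n)) (le_max_left _ _)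
    · have hxn : xi n ω = sigs ω := le_antisymm (hxile n ω) (not_lt.mp h1)
      have hxn1 : xi (n+1) ω = sigs ω :=
        le_antisymm (hxile _ ω) (hxn ▸ hxi_mono ω (Nat.le_succ n))
      have h2 : ¬ xi (n+1) ω < sigs ω := by rw [hxn1]; exact lt_irrefl _
      simp only [hzeta, if_neg h1, if_neg h2, hxn, hxn1]
      exact max_le_max (le_refl _) (Nat.cast_le.mpr (Nat.le_succ n))
  have hzeta_le : ∀ (n : ℕ) ω, zeta n ω ≤ sigf ω := by
    intro n ω
    by_cases h : ∀ k, xi k ω < sigs ω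
    · simp only [hzeta, hsigf, if_pos (h n), if_pos h]
      exact (h n).le
    · simp only [hsigf, if_neg h]
      exact le_top
  have hzeta_lt : ∀ (n : ℕ) ω, 0 < sigf ω → zeta n ω < sigf ω := by
    intro n ω _
    by_cases h : ∀ k, xi k ω < sigs ω
    · simp only [hzeta, hsigf, if_pos (h n), if_pos h]
      exact h n
    · simp only [hzeta, hsigf, if_neg h]
      by_cases h1 : xi n ω < sigs ω
      · rw [if_pos h1]
        exact lt_top_iff_ne_top.mpr (hxi_ne_top n ω)
      · rw [if_neg h1]
        exact max_lt (lt_top_iff_ne_top.mpr (hxi_ne_top n ω)) (ENNReal.natCast_lt_top n)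
  have hzeta_tend : ∀ ω, Tendsto (fun n => zeta n ω) atTop (nhds (sigf ω)) := by
    intro ω
    by_cases h : ∀ k, xi k ω < sigs ω
    · have hz : ∀ n, zeta n ω = xi n ω := fun n => by simp only [hzeta, if_pos (h n)]
      have ht : Tendsto (fun n => xi n ω) atTop (nhds (⨆ n, xi n ω)) :=
        tendsto_atTop_iSup (hxi_mono ω)
      have hs : sigf ω = ⨆ n, xi n ω := by simp only [hsigf]; exact if_pos h
      rw [hs]
      exact ht.congr fun n => (hz n).symm
    · push_neg at h
      obtain ⟨N, hN⟩ := h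
      have hxN : xi N ω = sigs ω := le_antisymm (hxile N ω) hN
      have hxn : ∀ n, N ≤ n → xi n ω = sigs ω := fun n hn =>
        le_antisymm (hxile n ω) (hxN ▸ hxi_mono ω hn)
      have hsig_ne : sigs ω ≠ ∞ := hxN ▸ hxi_ne_top N ω
      have hnall : ¬ ∀ k, xi k ω < sigs ω := not_forall.mpr ⟨N, not_lt.mpr hN⟩
      have hsf : sigf ω = ∞ := by
        simp only [hsigf, if_neg hnall]
      rw [hsf]
      obtain ⟨M, hM⟩ := ENNReal.exists_nat_gt hsig_ne
      have hev : ∀ n, max N M ≤ n → zeta n ω = (n : ℝ≥0∞) := by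
        intro n hn
        have h1 : xi n ω = sigs ω := hxn n (le_trans (le_max_left _ _) hn)
        have h2 : ¬ xi n ω < sigs ω := by rw [h1]; exact lt_irrefl _
        simp only [hzeta, if_neg h2, h1]
        refine max_eq_right ?_
        exact le_trans hM.le (Nat.cast_le.mpr (le_trans (le_max_right N M) hn))
      have hnat : Tendsto (fun n : ℕ => (n : ℝ≥0∞)) atTop (nhds ⊤) :=
        ENNReal.tendsto_nat_nhds_top
      exact hnat.congr' (Filter.eventually_atTop.mpr
        ⟨max N M, fun n hn => (hev n hn).symm⟩)
  have hpred : IsPredictableST ℱ sigf :=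
    ⟨hsigf_stop, zeta, hzeta_stop, hzeta_mono, hzeta_le, hzeta_lt, hzeta_tend⟩
  have h0 : μ {ω | ρ ω = sigf ω} = 0 := havoid sigf hpred
  -- Step 7 : conclusion
  have hGsub : G ⊆ (⋃ n, Bset n (δf n)) ∪ {ω | ρ ω = sigf ω} := by
    intro ω hω
    by_cases hBc : ∃ n, ω ∈ Bset n (δf n)
    · exact Or.inl (Set.mem_iUnion.mpr hBc)
    · right
      push_neg at hBc
      obtain ⟨hρ0, hρtop, hρσ⟩ := hmemG ω hω
      have heta_lt : ∀ n, eta n ω < ρ ω := by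
        intro n
        have h1 : ω ∉ Bset n (δf n) := hBc n
        have h2 : ¬ ρ ω ≤ gh n ω + (δf n : ℝ≥0∞) := by
          intro hcon
          exact h1 ⟨hρ0, hρtop, hgh_lt_rho ω hω n, hcon⟩
        simpa only [heta] using not_le.mp h2
      have hxi_lt : ∀ n, xi n ω < ρ ω := by
        intro n
        refine (Finset.sup_lt_iff (show ⊥ < ρ ω from hρ0)).mpr fun j _ => heta_lt j
      have hsup_eta : (⨆ n, eta n ω) = ρ ω := by
        refine le_antisymm (iSup_le fun n => (heta_lt n).le) ?_
        rw [← hgh_sup ω hω]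
        exact iSup_mono fun n => le_self_add
      have hsigs_eq : sigs ω = ρ ω := by
        refine le_antisymm (iSup_le fun n => (hxi_lt n).le) ?_
        rw [← hsup_eta]
        refine iSup_mono fun n => ?_
        exact Finset.le_sup (f := fun j => eta j ω) (Finset.self_mem_range_succ n)
      have hA : ∀ n, xi n ω < sigs ω := fun n => by rw [hsigs_eq]; exact hxi_lt n
      show ρ ω = sigf ω
      simp only [hsigf, if_pos hA]
      exact hsigs_eq.symm
  calc μ G ≤ μ ((⋃ n, Bset n (δf n)) ∪ {ω | ρ ω = sigf ω}) := measure_mono hGsub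
    _ ≤ μ (⋃ n, Bset n (δf n)) + μ {ω | ρ ω = sigf ω} := measure_union_le _ _
    _ = μ (⋃ n, Bset n (δf n)) := by rw [h0, add_zero]
    _ ≤ ∑' n, μ (Bset n (δf n)) := measure_iUnion_le _
    _ ≤ ∑' n : ℕ, ε * 2⁻¹ ^ (n+1) := ENNReal.tsum_le_tsum fun n => hδle n
    _ = ε := by
        rw [ENNReal.tsum_mul_left]
        have h1 : (∑' n : ℕ, (2⁻¹ : ℝ≥0∞) ^ (n+1)) = 1 := by
          have h2 : ∀ n : ℕ, (2⁻¹ : ℝ≥0∞) ^ (n+1) = (2⁻¹ : ℝ≥0∞) ^ n * 2⁻¹ :=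
            fun n => pow_succ _ n
          rw [tsum_congr h2, ENNReal.tsum_mul_right, ENNReal.tsum_geometric,
            ENNReal.one_sub_inv_two, inv_inv]
          exact ENNReal.mul_inv_cancel (by norm_num) ENNReal.ofNat_ne_top
        rw [h1, mul_one]


end AuxiliaryForTotallyInaccessible

/-- A random time avoiding all `F`-predictable stopping times is a totally inaccessible
stopping time in the progressively enlarged filtration
`F^ρ_t = ⋂_{s > t} (F_s ∨ σ(ρ ∧ s))`. -/
theorem totally_inaccessible_in_enlarged_filtration {m : MeasurableSpace Ω}
    (ℱ : Filtration ℝ≥0 m) (μ : Measure Ω) [IsProbabilityMeasure μ]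
    (ρ : Ω → ℝ≥0∞) (hρmeas : Measurable ρ)
    (hρ : μ {ω | 0 < ρ ω ∧ ρ ω < ∞} = 1)
    (havoid : AvoidsPredictableST ℱ μ ρ)
    (𝒢 : Filtration ℝ≥0 m)
    (h𝒢 : ∀ t : ℝ≥0, (𝒢 t : MeasurableSpace Ω) =
      ⨅ s ∈ Set.Ioi t, ((ℱ s : MeasurableSpace Ω) ⊔
        MeasurableSpace.comap (fun ω => min (ρ ω) (s : ℝ≥0∞)) inferInstance)) :
    IsTotallyInaccessible 𝒢 μ ρ := by
  constructor
  · -- ρ is a stopping time in the enlarged filtration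
    intro t
    rw [h𝒢 t]
    rw [MeasurableSpace.measurableSet_iInf]
    intro s
    rw [MeasurableSpace.measurableSet_iInf]
    intro hs
    have hmem : MeasurableSet[MeasurableSpace.comap
        (fun ω => min (ρ ω) ((s : ℝ≥0) : ℝ≥0∞)) inferInstance] {ω | ρ ω ≤ (t : ℝ≥0∞)} := by
      refine ⟨Set.Iic (t : ℝ≥0∞), measurableSet_Iic, ?_⟩
      ext ω
      simp only [Set.mem_preimage, Set.mem_Iic, Set.mem_setOf_eq]
      constructor
      · intro h
        by_contra hc
        push_neg at hc
        have hst : (t : ℝ≥0∞) < ((s : ℝ≥0) : ℝ≥0∞) :=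
          ENNReal.coe_lt_coe.mpr (Set.mem_Ioi.mp hs)
        exact absurd h (not_le.mpr (lt_min hc hst))
      · intro h
        exact le_trans (min_le_left _ _) h
    have hle2 : MeasurableSpace.comap (fun ω => min (ρ ω) ((s : ℝ≥0) : ℝ≥0∞)) inferInstance ≤
        (ℱ s : MeasurableSpace Ω) ⊔
          MeasurableSpace.comap (fun ω => min (ρ ω) ((s : ℝ≥0) : ℝ≥0∞)) inferInstance :=
      le_sup_right
    exact hle2 _ hmem
  · -- total inaccessibility
    intro σ hσ
    have hkey : ∀ ε : ℝ≥0∞, ε ≠ 0 → μ {ω | 0 < ρ ω ∧ ρ ω < ∞ ∧ ρ ω = σ ω} ≤ ε :=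
      fun ε hε => key_avoid ℱ μ ρ hρmeas havoid 𝒢 h𝒢 σ hσ hε
    have hG0 : μ {ω | 0 < ρ ω ∧ ρ ω < ∞ ∧ ρ ω = σ ω} = 0 := by
      by_contra hne
      have h2 := hkey (μ {ω | 0 < ρ ω ∧ ρ ω < ∞ ∧ ρ ω = σ ω} / 2) (by
        intro h
        rcases ENNReal.div_eq_zero_iff.mp h with h | h
        · exact hne h
        · exact ENNReal.ofNat_ne_top h)
      exact absurd h2 (not_le.mpr (ENNReal.half_lt_self hne (measure_ne_top μ _)))
    have hmeasset : MeasurableSet {ω | 0 < ρ ω ∧ ρ ω < ∞} := by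
      have hrfl : {ω | 0 < ρ ω ∧ ρ ω < ∞} = ρ ⁻¹' (Set.Ioo 0 ∞) := rfl
      rw [hrfl]
      exact hρmeas measurableSet_Ioo
    have hcompl : μ ({ω | 0 < ρ ω ∧ ρ ω < ∞}ᶜ) = 0 := by
      rw [measure_compl hmeasset (measure_ne_top μ _), measure_univ, hρ, tsub_self]
    have hsub : {ω | ρ ω = σ ω ∧ ρ ω ≠ ∞} ⊆
        {ω | 0 < ρ ω ∧ ρ ω < ∞ ∧ ρ ω = σ ω} ∪ {ω | 0 < ρ ω ∧ ρ ω < ∞}ᶜ := by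
      rintro ω ⟨h1, _⟩
      by_cases h3 : 0 < ρ ω ∧ ρ ω < ∞
      · exact Or.inl ⟨h3.1, h3.2, h1⟩
      · exact Or.inr h3
    refine le_antisymm ?_ (zero_le)
    calc μ {ω | ρ ω = σ ω ∧ ρ ω ≠ ∞}
        ≤ μ ({ω | 0 < ρ ω ∧ ρ ω < ∞ ∧ ρ ω = σ ω} ∪ {ω | 0 < ρ ω ∧ ρ ω < ∞}ᶜ) :=
          measure_mono hsub
      _ ≤ μ {ω | 0 < ρ ω ∧ ρ ω < ∞ ∧ ρ ω = σ ω} + μ ({ω | 0 < ρ ω ∧ ρ ω < ∞}ᶜ) :=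
          measure_union_le _ _
      _ = 0 := by rw [hG0, hcompl, add_zero]

end
end
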